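/- Define g : [0,∞) → [0,∞) by g(r) = r/(log r)² for r > e² and g(r) = (e/2)² for 0 ≤ r ≤ e². Then for every b > 0 and every k ∈ ℕ there exist constants K > 0 and t₀ > e² such that for all t ≥ t₀: ∫_t^∞ r^k e^{−b g(r)} dr ≤ K·t^{2k+2}·e^{−b g(t)}. In particular, g satisfies Assumption 1 with l(k) = 2k + 2. -/

import Mathlib

noncomputable section

open Real MeasureTheory Set Filter


lemma my_key {b r : ℝ} (hb : 0 < b) (n k : ℕ) (hn : 2 ≤ n) (hkn : k + 1 ≤ n)
    (hr4 : Real.exp 4 ≤ r) (hbs : 64 * n ≤ b * Real.sqrt r) :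
    r ^ k + n * r ^ (n-1) ≤ b * ((Real.log r - 2) / (Real.log r) ^ 3) * r ^ n := by
  have hr1 : (1:ℝ) ≤ r := le_trans (Real.one_le_exp (by norm_num)) hr4
  have hr0 : (0:ℝ) < r := lt_of_lt_of_le one_pos hr1
  set L := Real.log r with hL
  set s := Real.sqrt r with hs
  set q := Real.sqrt s with hq
  have hs0 : 0 < s := Real.sqrt_pos.2 hr0
  have hq0 : 0 < q := Real.sqrt_pos.2 hs0
  have hqs : q ^ 2 = s := Real.sq_sqrt hs0.le
  have hsr : s ^ 2 = r := Real.sq_sqrt hr0.le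
  have hL4 : 4 ≤ L := by
    rw [hL, Real.le_log_iff_exp_le hr0]; exact hr4
  have hL0 : 0 < L := by linarith
  -- log r ≤ 4 q
  have hlog4q : L ≤ 4 * q := by
    have h1 : Real.log s = L / 2 := Real.log_sqrt hr0.le
    have h2 : Real.log q = Real.log s / 2 := Real.log_sqrt hs0.le
    have h3 : Real.log q ≤ q - 1 := Real.log_le_sub_one_of_pos hq0
    linarith
  have hL16 : L ^ 2 ≤ 16 * s := by
    calc L ^ 2 ≤ (4 * q) ^ 2 := by nlinarith
      _ = 16 * s := by rw [mul_pow]; rw [hqs]; ring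
  set P := r ^ (n - 1) with hP
  have hP1 : (1:ℝ) ≤ P := one_le_pow₀ hr1
  have hkP : r ^ k ≤ P := pow_le_pow_right₀ hr1 (by omega)
  have hrn : r ^ n = P * r := by
    rw [hP, ← pow_succ]; congr 1; omega
  have hP0 : (0:ℝ) < P := lt_of_lt_of_le one_pos hP1
  have hgoal : b * ((L - 2) / L ^ 3) * r ^ n = b * (L - 2) * r ^ n / L ^ 3 := by ring
  rw [hgoal, le_div_iff₀ (by positivity : (0:ℝ) < L ^ 3)]
  have c1 : (r ^ k + (n:ℝ) * P) * L ^ 3 ≤ ((n:ℝ) + 1) * P * (L * (16 * s)) := by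
    have a1 : r ^ k + (n:ℝ) * P ≤ ((n:ℝ) + 1) * P := by nlinarith
    have a2 : L ^ 3 ≤ L * (16 * s) := by nlinarith
    have := mul_le_mul a1 a2 (by positivity) (by positivity)
    linarith
  have hn2 : (2:ℝ) ≤ (n:ℝ) := by exact_mod_cast hn
  have c2 : ((n:ℝ) + 1) * P * (L * (16 * s)) ≤ 32 * (n:ℝ) * (P * (L * s)) := by
    nlinarith [mul_pos hP0 (mul_pos hL0 hs0)]
  have c3 : 32 * (n:ℝ) * (P * (L * s)) ≤ b * (L - 2) * r ^ n := by
    rw [hrn]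
    have e1 : P * r = P * s * s := by rw [← hsr]; ring
    rw [e1]
    have d1 : (64:ℝ) * n ≤ b * s := hbs
    have w1 : (0:ℝ) ≤ P * s := (mul_pos hP0 hs0).le
    have w2 : (64 * (n:ℝ)) * (L / 2) ≤ (b * s) * (L - 2) := by
      nlinarith [mul_nonneg (sub_nonneg.2 d1) (show (0:ℝ) ≤ L - 2 - L / 2 by linarith)]
    have w3 : b * (L - 2) * (P * s * s) = ((b * s) * (L - 2)) * (P * s) := by ring
    have w4 : 32 * (n:ℝ) * (P * (L * s)) = ((64 * (n:ℝ)) * (L / 2)) * (P * s) := by ring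
    rw [w3, w4]
    exact mul_le_mul_of_nonneg_right w2 w1
  linarith

lemma my_Lsq {r : ℝ} (hr1 : 1 ≤ r) : (Real.log r) ^ 2 ≤ 16 * Real.sqrt r := by
  have hr0 : (0:ℝ) < r := lt_of_lt_of_le one_pos hr1
  have hs0 : 0 < Real.sqrt r := Real.sqrt_pos.2 hr0
  have hq0 : 0 < Real.sqrt (Real.sqrt r) := Real.sqrt_pos.2 hs0
  have hqs : (Real.sqrt (Real.sqrt r)) ^ 2 = Real.sqrt r := Real.sq_sqrt hs0.le
  have h1 : Real.log (Real.sqrt r) = Real.log r / 2 := Real.log_sqrt hr0.le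
  have h2 : Real.log (Real.sqrt (Real.sqrt r)) = Real.log (Real.sqrt r) / 2 :=
    Real.log_sqrt (Real.sqrt_nonneg r)
  have h3 : Real.log (Real.sqrt (Real.sqrt r)) ≤ Real.sqrt (Real.sqrt r) - 1 :=
    Real.log_le_sub_one_of_pos hq0
  have hL0 : 0 ≤ Real.log r := Real.log_nonneg hr1
  have hlog4q : Real.log r ≤ 4 * Real.sqrt (Real.sqrt r) := by linarith
  calc (Real.log r) ^ 2 ≤ (4 * Real.sqrt (Real.sqrt r)) ^ 2 := by nlinarith
    _ = 16 * Real.sqrt r := by rw [mul_pow, hqs]; ring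

lemma my_tendsto_sqrt_atTop : Filter.Tendsto Real.sqrt Filter.atTop Filter.atTop := by
  apply Filter.tendsto_atTop.2
  intro C
  filter_upwards [Filter.eventually_ge_atTop ((max 0 C) ^ 2)] with x hx
  have h0 : (0:ℝ) ≤ max 0 C := le_max_left _ _
  calc C ≤ max 0 C := le_max_right _ _
    _ = Real.sqrt ((max 0 C) ^ 2) := by rw [Real.sqrt_sq h0]
    _ ≤ Real.sqrt x := Real.sqrt_le_sqrt hx

lemma my_hasDeriv (b : ℝ) (n : ℕ) {r : ℝ} (hr : Real.exp 2 < r) :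
    HasDerivAt (fun x => -(x ^ n * Real.exp (-b * (x / (Real.log x) ^ 2))))
      ((b * ((Real.log r - 2) / (Real.log r) ^ 3) * r ^ n - (n:ℝ) * r ^ (n-1))
        * Real.exp (-b * (r / (Real.log r) ^ 2))) r := by
  have hr0 : (0:ℝ) < r := lt_trans (Real.exp_pos 2) hr
  have hL2 : 2 ≤ Real.log r := (Real.le_log_iff_exp_le hr0).2 hr.le
  have hLne : Real.log r ≠ 0 := by linarith
  have hLsq : (Real.log r) ^ 2 ≠ 0 := pow_ne_zero _ hLne
  have d1 : HasDerivAt Real.log r⁻¹ r := Real.hasDerivAt_log hr0.ne'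
  have d2 : HasDerivAt (fun x => (Real.log x) ^ 2) (2 * (Real.log r) ^ 1 * r⁻¹) r := by
    simpa using d1.fun_pow 2
  have d3 : HasDerivAt (fun x => x / (Real.log x) ^ 2)
      ((1 * (Real.log r) ^ 2 - r * (2 * (Real.log r) ^ 1 * r⁻¹)) / ((Real.log r) ^ 2) ^ 2) r :=
    (hasDerivAt_id' r).div d2 hLsq
  have d4 := d3.const_mul (-b)
  have d5 := d4.exp
  have d6 := (hasDerivAt_pow n r).fun_mul d5
  have d7 := d6.fun_neg
  refine d7.congr_deriv ?_
  field_simp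
  ring

lemma my_tendsto (b : ℝ) (hb : 0 < b) (n : ℕ) :
    Filter.Tendsto (fun r => r ^ n * Real.exp (-b * (r / (Real.log r) ^ 2)))
      Filter.atTop (nhds 0) := by
  have h16 : (0:ℝ) < b / 16 := by positivity
  have t0 : Filter.Tendsto (fun u : ℝ => (b/16) * u) Filter.atTop Filter.atTop :=
    Filter.Tendsto.const_mul_atTop h16 Filter.tendsto_id
  have t1 : Filter.Tendsto (fun u : ℝ => ((b/16)*u) ^ (2*n) * Real.exp (-((b/16)*u)))
      Filter.atTop (nhds 0) := by
    have := (Real.tendsto_pow_mul_exp_neg_atTop_nhds_zero (2*n)).comp t0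
    simpa [Function.comp_def] using this
  have t2 : Filter.Tendsto
      (fun u : ℝ => (16/b) ^ (2*n) * (((b/16)*u) ^ (2*n) * Real.exp (-((b/16)*u))))
      Filter.atTop (nhds 0) := by
    simpa using t1.const_mul ((16/b) ^ (2*n))
  have t3 : Filter.Tendsto (fun u : ℝ => u ^ (2*n) * Real.exp (-((b/16)*u)))
      Filter.atTop (nhds 0) := by
    refine t2.congr (fun u => ?_)
    have hbne : b ≠ 0 := ne_of_gt hb
    rw [mul_pow, ← mul_assoc, ← mul_assoc, ← mul_pow]
    field_simp
    simp
  have t4 : Filter.Tendsto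
      (fun r : ℝ => (Real.sqrt r) ^ (2*n) * Real.exp (-((b/16) * Real.sqrt r)))
      Filter.atTop (nhds 0) := by
    have := t3.comp my_tendsto_sqrt_atTop
    simpa [Function.comp_def] using this
  apply tendsto_of_tendsto_of_tendsto_of_le_of_le' tendsto_const_nhds t4
  · filter_upwards [Filter.eventually_ge_atTop (0:ℝ)] with r hr
    positivity
  · filter_upwards [Filter.eventually_ge_atTop (3:ℝ)] with r hr3
    have hr1 : (1:ℝ) ≤ r := by linarith
    have hr0 : (0:ℝ) < r := lt_of_lt_of_le one_pos hr1
    have hs0 : 0 < Real.sqrt r := Real.sqrt_pos.2 hr0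
    have hsr : (Real.sqrt r) ^ 2 = r := Real.sq_sqrt hr0.le
    have hLsq : (Real.log r) ^ 2 ≤ 16 * Real.sqrt r := my_Lsq hr1
    have hpow : r ^ n = (Real.sqrt r) ^ (2*n) := by
      rw [pow_mul, hsr]
    have hexp : Real.exp (-b * (r / (Real.log r) ^ 2)) ≤ Real.exp (-((b/16) * Real.sqrt r)) := by
      apply Real.exp_le_exp.2
      have hL : Real.log r ≠ 0 := ne_of_gt (Real.log_pos (by linarith))
      have hLsq0 : (0:ℝ) < (Real.log r) ^ 2 := by positivity
      have key : Real.sqrt r / 16 ≤ r / (Real.log r) ^ 2 := by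
        rw [div_le_div_iff₀ (by norm_num) hLsq0]
        nlinarith [Real.sqrt_nonneg r]
      have : b * (Real.sqrt r / 16) ≤ b * (r / (Real.log r) ^ 2) :=
        mul_le_mul_of_nonneg_left key hb.le
      nlinarith
    calc r ^ n * Real.exp (-b * (r / (Real.log r) ^ 2))
        ≤ r ^ n * Real.exp (-((b/16) * Real.sqrt r)) := by
          exact mul_le_mul_of_nonneg_left hexp (by positivity)
      _ = (Real.sqrt r) ^ (2*n) * Real.exp (-((b/16) * Real.sqrt r)) := by rw [hpow]

/-- The sub-exponential weight `g(r) = r/(log r)²` for `r > e²`, continued by the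
constant `(e/2)²` for `0 ≤ r ≤ e²` (equation (2.12) of the paper with `p = 2`). -/
def subexpWeight (r : ℝ) : ℝ :=
  if Real.exp 2 < r then r / (Real.log r) ^ 2 else (Real.exp 1 / 2) ^ 2

/-- For every `b > 0` and `k ∈ ℕ` there are constants `K > 0` and `t₀ > e²` such that
`∫_t^∞ r^k e^{−b g(r)} dr ≤ K·t^{2k+2}·e^{−b g(t)}` for all `t ≥ t₀`, where
`g = subexpWeight`; in particular `g` satisfies Assumption 1 with `l(k) = 2k + 2`. -/
theorem subexp_tail_integral_bound :
    ∀ b : ℝ, 0 < b → ∀ k : ℕ, ∃ K : ℝ, 0 < K ∧ ∃ t₀ : ℝ, Real.exp 2 < t₀ ∧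
      ∀ t : ℝ, t₀ ≤ t →
        (∫ r in Set.Ioi t, r ^ k * Real.exp (-b * subexpWeight r))
          ≤ K * t ^ (2 * k + 2) * Real.exp (-b * subexpWeight t) := by
  intro b hb k
  refine ⟨1, one_pos, ?_⟩
  set n : ℕ := 2 * k + 2 with hn
  have hn2 : 2 ≤ n := by omega
  have hkn : k + 1 ≤ n := by omega
  refine ⟨(64 * n / b) ^ 2 + Real.exp 4, ?_, ?_⟩
  · have h1 : Real.exp 2 < Real.exp 4 := Real.exp_lt_exp.2 (by norm_num)
    have h2 : (0:ℝ) ≤ (64 * n / b) ^ 2 := sq_nonneg _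
    linarith
  intro t ht
  have ht4 : Real.exp 4 ≤ t := le_trans (le_add_of_nonneg_left (sq_nonneg _)) ht
  have hte : Real.exp 2 < t := lt_of_lt_of_le (Real.exp_lt_exp.2 (by norm_num)) ht4
  have ht0 : (0:ℝ) < t := lt_trans (Real.exp_pos 2) hte
  have hfacts : ∀ r : ℝ, t ≤ r →
      Real.exp 2 < r ∧ Real.exp 4 ≤ r ∧ 64 * (n:ℝ) ≤ b * Real.sqrt r := by
    intro r hr
    refine ⟨lt_of_lt_of_le hte hr, le_trans ht4 hr, ?_⟩
    have h1 : (64 * (n:ℝ) / b) ^ 2 ≤ r := by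
      have h4 := Real.exp_pos 4
      have h5 := le_trans ht hr
      linarith
    have h2 : 64 * (n:ℝ) / b ≤ Real.sqrt r := by
      have h3 : Real.sqrt ((64 * (n:ℝ) / b) ^ 2) ≤ Real.sqrt r := Real.sqrt_le_sqrt h1
      rwa [Real.sqrt_sq (by positivity)] at h3
    calc 64 * (n:ℝ) = b * (64 * (n:ℝ) / b) := by field_simp
      _ ≤ b * Real.sqrt r := mul_le_mul_of_nonneg_left h2 hb.le
  set ψ : ℝ → ℝ := fun r =>
    (b * ((Real.log r - 2) / (Real.log r) ^ 3) * r ^ n - (n:ℝ) * r ^ (n-1))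
      * Real.exp (-b * (r / (Real.log r) ^ 2)) with hψ
  set G : ℝ → ℝ := fun r => -(r ^ n * Real.exp (-b * (r / (Real.log r) ^ 2))) with hG
  have hderiv : ∀ x ∈ Ioi t, HasDerivAt G (ψ x) x :=
    fun x hx => my_hasDeriv b n (hfacts x (le_of_lt hx)).1
  have hkey : ∀ x : ℝ, t ≤ x →
      x ^ k + (n:ℝ) * x ^ (n-1) ≤ b * ((Real.log x - 2) / (Real.log x) ^ 3) * x ^ n := by
    intro x hx
    exact my_key hb n k hn2 hkn (hfacts x hx).2.1 (hfacts x hx).2.2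
  have hx0 : ∀ x : ℝ, t ≤ x → (0:ℝ) ≤ x := fun x hx => le_trans ht0.le hx
  have hbound : ∀ x ∈ Ioi t,
      x ^ k * Real.exp (-b * (x / (Real.log x) ^ 2)) ≤ ψ x := by
    intro x hx
    have h1 := hkey x (le_of_lt hx)
    have h2 : x ^ k ≤ b * ((Real.log x - 2) / (Real.log x) ^ 3) * x ^ n - (n:ℝ) * x ^ (n-1) := by
      linarith
    exact mul_le_mul_of_nonneg_right h2 (Real.exp_pos _).le
  have hpos : ∀ x ∈ Ioi t, 0 ≤ ψ x := by
    intro x hx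
    have h1 := hbound x hx
    have h2 : (0:ℝ) ≤ x ^ k * Real.exp (-b * (x / (Real.log x) ^ 2)) :=
      mul_nonneg (pow_nonneg (hx0 x (le_of_lt hx)) k) (Real.exp_pos _).le
    linarith
  have hcont : ContinuousWithinAt G (Ici t) t :=
    (my_hasDeriv b n hte).continuousAt.continuousWithinAt
  have htend : Tendsto G atTop (nhds 0) := by
    have h := (my_tendsto b hb n).neg
    rw [neg_zero] at h
    exact h
  have hint : IntegrableOn ψ (Ioi t) :=
    integrableOn_Ioi_deriv_of_nonneg hcont hderiv hpos htend
  have hval : ∫ x in Ioi t, ψ x = 0 - G t :=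
    integral_Ioi_of_hasDerivAt_of_nonneg hcont hderiv hpos htend
  have hcongr : (∫ r in Ioi t, r ^ k * Real.exp (-b * subexpWeight r))
      = ∫ r in Ioi t, r ^ k * Real.exp (-b * (r / (Real.log r) ^ 2)) := by
    apply setIntegral_congr_fun measurableSet_Ioi
    intro r hr
    simp only [subexpWeight, if_pos (hfacts r (le_of_lt hr)).1]
  have hmono : (∫ r in Ioi t, r ^ k * Real.exp (-b * (r / (Real.log r) ^ 2)))
      ≤ ∫ r in Ioi t, ψ r := by
    apply integral_mono_of_nonneg
    · refine (ae_restrict_iff' measurableSet_Ioi).2 (ae_of_all _ fun r hr => ?_)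
      exact mul_nonneg (pow_nonneg (hx0 r (le_of_lt hr)) k) (Real.exp_pos _).le
    · exact hint
    · exact (ae_restrict_iff' measurableSet_Ioi).2 (ae_of_all _ hbound)
  have hfin : (0:ℝ) - G t = 1 * t ^ (2 * k + 2) * Real.exp (-b * subexpWeight t) := by
    have hsw : subexpWeight t = t / (Real.log t) ^ 2 := if_pos hte
    simp only [hG, hsw, zero_sub, neg_neg, one_mul, hn]
  calc (∫ r in Ioi t, r ^ k * Real.exp (-b * subexpWeight r))
      = ∫ r in Ioi t, r ^ k * Real.exp (-b * (r / (Real.log r) ^ 2)) := hcongr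
    _ ≤ ∫ r in Ioi t, ψ r := hmono
    _ = 0 - G t := hval
    _ = 1 * t ^ (2 * k + 2) * Real.exp (-b * subexpWeight t) := hfin

end
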